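/- Let k be a field of characteristic 0, let s ≥ 3 be an integer, and let λ ∈ k with λ ≠ 0. In k[t, x, y, z], set J_λ = (x, z) ∩ (y, z) ∩ (x + y, z) ∩ (x + 2y, z) ∩ … ∩ (x + (s−3)y, z) ∩ ((x, y, z)^{s−1} + (z^2)) ∩ (x − y − λt, z) ∩ (x, x − y − λt, z)^2 ∩ (y, x − y − λt, z)^2 ∩ (x + y, x − y − λt, z)^2 ∩ … ∩ (x + (s−3)y, x − y − λt, z)^2 (where the factors involving x + iy range over i = 1, …, s−3, an empty list when s = 3). Then J_λ + (z) = (x · y · (x + y) · (x + 2y) ⋯ (x + (s−3)y) · (x − y − λt)) + (z) as ideals of k[t, x, y, z]. (This computes the trace on the plane z = 0 of the scheme X_λ consisting of a (2,s−1)-cone configuration plus the line x − y − λt = z = 0 with double points at its s−1 intersections with the cone lines.) -/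

import Mathlib

open MvPolynomial

section Aux
variable {k : Type*} [Field k] [CharZero k]

private lemma prime_X_fin4 (n : Fin 4) : Prime (X n : MvPolynomial (Fin 4) k) := by
  have h0 : Prime (X 0 : MvPolynomial (Fin 4) k) := by
    rw [← MulEquiv.prime_iff (MvPolynomial.finSuccEquiv k 3).toMulEquiv]
    have : (MvPolynomial.finSuccEquiv k 3).toMulEquiv (X 0) = Polynomial.X :=
      finSuccEquiv_X_zero
    rw [this]
    exact Polynomial.prime_X
  have e := (MulEquiv.prime_iff (renameEquiv k (Equiv.swap (0 : Fin 4) n)).toMulEquiv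
      (p := (X 0 : MvPolynomial (Fin 4) k))).symm
  rw [e] at h0
  have : (renameEquiv k (Equiv.swap (0 : Fin 4) n)).toMulEquiv (X 0)
      = (X n : MvPolynomial (Fin 4) k) := by
    show renameEquiv k (Equiv.swap (0 : Fin 4) n) (X 0) = _
    simp
  rwa [this] at h0

/-- Linear forms `X 1 + a X 2 + b X 0`. -/
private noncomputable def F (a b : k) : MvPolynomial (Fin 4) k :=
  X 1 + C a * X 2 + C b * X 0

private noncomputable def shear (a b : k) :
    MvPolynomial (Fin 4) k ≃ₐ[k] MvPolynomial (Fin 4) k :=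
  AlgEquiv.ofAlgHom
    (aeval (fun i => if i = 1 then X 1 + C a * X 2 + C b * X 0 else X i))
    (aeval (fun i => if i = 1 then X 1 - C a * X 2 - C b * X 0 else X i))
    (by apply MvPolynomial.algHom_ext; intro i; fin_cases i <;> simp <;> ring)
    (by apply MvPolynomial.algHom_ext; intro i; fin_cases i <;> simp <;> ring)

private lemma prime_F (a b : k) : Prime (F a b : MvPolynomial (Fin 4) k) := by
  have h := (MulEquiv.prime_iff (shear a b).toMulEquiv (p := (X 1 : MvPolynomial (Fin 4) k))).symm
  have h2 : (shear a b).toMulEquiv (X 1) = F a b := by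
    show shear a b (X 1) = F a b
    simp [shear, AlgEquiv.ofAlgHom, F]
  rw [h2] at h
  exact h.mp (prime_X_fin4 1)

private lemma eval_F (a b : k) (v : Fin 4 → k) :
    eval v (F a b) = v 1 + a * v 2 + b * v 0 := by
  simp [F]

private lemma not_dvd_of_eval {p q : MvPolynomial (Fin 4) k} (v : Fin 4 → k)
    (hp : eval v p = 0) (hq : eval v q ≠ 0) : ¬ p ∣ q := by
  rintro ⟨c, rfl⟩
  exact hq (by rw [map_mul, hp, zero_mul])

private lemma mul_dvd_step {R : Type*} [CommRing R] {p q a : R}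
    (hp : Prime p) (hpa : p ∣ a) (hqa : q ∣ a) (hpq : ¬ p ∣ q) : q * p ∣ a := by
  obtain ⟨b, rfl⟩ := hqa
  rcases hp.dvd_mul.mp hpa with h | h
  · exact absurd h hpq
  · obtain ⟨c, rfl⟩ := h
    exact ⟨c, by ring⟩

private lemma prod_mem_pow {R : Type*} [CommRing R] (S : Finset ℕ) (f : ℕ → R)
    (I : Ideal R) (h : ∀ i ∈ S, f i ∈ I) : ∏ i ∈ S, f i ∈ I ^ S.card := by
  classical
  induction S using Finset.induction_on with
  | empty => simp
  | insert i S hiS ih =>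
    rw [Finset.prod_insert hiS, Finset.card_insert_of_notMem hiS, pow_succ']
    exact Ideal.mul_mem_mul (h _ (Finset.mem_insert_self i S))
      (ih fun j hj => h j (Finset.mem_insert_of_mem hj))

private lemma mem_of_dvd' {R : Type*} [CommRing R] {I : Ideal R} {a b : R}
    (h : a ∣ b) (ha : a ∈ I) : b ∈ I := by
  obtain ⟨c, rfl⟩ := h
  exact Ideal.mul_mem_right _ _ ha

/-- The "set `z = 0`" substitution. -/
private noncomputable def phi : MvPolynomial (Fin 4) k →ₐ[k] MvPolynomial (Fin 4) k :=
  aeval (fun i => if i = 3 then 0 else X i)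

private lemma phi_X3 : phi (X 3 : MvPolynomial (Fin 4) k) = 0 := by simp [phi]

private lemma phi_F (a b : k) : phi (F a b) = F a b := by
  simp [phi, F]

private lemma phi_X2 : phi (X 2 : MvPolynomial (Fin 4) k) = X 2 := by simp [phi]

private lemma sub_phi_mem (f : MvPolynomial (Fin 4) k) :
    f - phi f ∈ Ideal.span {(X 3 : MvPolynomial (Fin 4) k)} := by
  induction f using MvPolynomial.induction_on with
  | C a => simp [phi]
  | add p q hp hq =>
    have h : p + q - phi (p + q) = (p - phi p) + (q - phi q) := by
      rw [map_add]; ring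
    rw [h]; exact Ideal.add_mem _ hp hq
  | mul_X p n ih =>
    by_cases hn : n = 3
    · subst hn
      have h : p * X 3 - phi (p * X 3) = p * X 3 := by
        rw [map_mul, phi_X3, mul_zero, sub_zero]
      rw [h]
      exact Ideal.mul_mem_left _ _ (Ideal.subset_span rfl)
    · have hX : phi (X n : MvPolynomial (Fin 4) k) = X n := by simp [phi, hn]
      have h : p * X n - phi (p * X n) = (p - phi p) * X n := by
        rw [map_mul, hX]; ring
      rw [h]
      exact Ideal.mul_mem_right _ _ ih

end Aux

/-- In `k[t,x,y,z]` with `char k = 0`, `s ≥ 3`, `λ ≠ 0`: the trace on the plane `z = 0` of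
the scheme `X_λ` (a `(2,s-1)`-cone configuration plus the line `x - y - λt = z = 0` with
double points at its `s-1` intersections with the cone lines) is the union of the `s` lines
`x, y, x+y, …, x+(s-3)y, x-y-λt` in the plane: `J_λ + (z) = (x·y·(x+y)⋯(x+(s-3)y)·(x-y-λt)) + (z)`. -/
theorem trace_of_X_lambda (k : Type*) [Field k] [CharZero k] (s : ℕ) (hs : 3 ≤ s)
    (l : k) (hl : l ≠ 0) :
    let t : MvPolynomial (Fin 4) k := X 0
    let x : MvPolynomial (Fin 4) k := X 1
    let y : MvPolynomial (Fin 4) k := X 2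
    let z : MvPolynomial (Fin 4) k := X 3
    let J : Ideal (MvPolynomial (Fin 4) k) :=
      Ideal.span {x, z} ⊓ Ideal.span {y, z} ⊓
        (⨅ i ∈ Finset.Icc 1 (s - 3), Ideal.span {x + i • y, z}) ⊓
        ((Ideal.span {x, y, z}) ^ (s - 1) + Ideal.span {z ^ 2}) ⊓
        Ideal.span {x - y - C l * t, z} ⊓
        (Ideal.span {x, x - y - C l * t, z}) ^ 2 ⊓
        (Ideal.span {y, x - y - C l * t, z}) ^ 2 ⊓
        (⨅ i ∈ Finset.Icc 1 (s - 3), (Ideal.span {x + i • y, x - y - C l * t, z}) ^ 2)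
    J + Ideal.span {z} =
      Ideal.span
          {x * y * (∏ i ∈ Finset.Icc 1 (s - 3), (x + i • y)) * (x - y - C l * t)} +
        Ideal.span {z} := by
  intro t x y z J
  have hx : x = X 1 := rfl
  have hy : y = X 2 := rfl
  have hz : z = X 3 := rfl
  have ht : t = X 0 := rfl
  set m := s - 3 with hm
  have hs1 : s - 1 = m + 2 := by omega
  set L : MvPolynomial (Fin 4) k := x - y - C l * t with hLdef
  set Q : MvPolynomial (Fin 4) k := ∏ i ∈ Finset.Icc 1 m, (x + i • y) with hQdef
  set P : MvPolynomial (Fin 4) k := x * y * Q * L with hPdef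
  -- normal forms
  have hform : ∀ i : ℕ, x + i • y = F ((i : k)) 0 := by
    intro i
    rw [hx, hy]
    simp [F, nsmul_eq_mul]
  have hLform : L = F (-1 : k) (-l) := by
    rw [hLdef, hx, hy, ht]
    simp [F, map_neg]
    ring
  -- primality
  have hprimeY : Prime y := hy ▸ prime_X_fin4 2
  have hprimeL : Prime L := hLform ▸ prime_F (-1) (-l)
  have hprimeI : ∀ i : ℕ, Prime (x + i • y) := fun i => (hform i) ▸ prime_F _ 0
  -- non-divisibilities
  have hyx : ¬ y ∣ x := by
    apply not_dvd_of_eval (v := ![0, 1, 0, 0]) <;> simp [hx, hy]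
  have hix : ∀ i ∈ Finset.Icc 1 m, ¬ (x + i • y) ∣ x := by
    intro i hi
    have h1 : 1 ≤ i := (Finset.mem_Icc.mp hi).1
    rw [hform i, hx]
    apply not_dvd_of_eval (v := ![0, (i : k), -1, 0])
    · rw [eval_F]; simp
    · simp
      exact_mod_cast Nat.one_le_iff_ne_zero.mp h1
  have hiy : ∀ i ∈ Finset.Icc 1 m, ¬ (x + i • y) ∣ y := by
    intro i hi
    rw [hform i, hy]
    apply not_dvd_of_eval (v := ![0, -(i : k), 1, 0])
    · rw [eval_F]; simp
    · simp
  have hij : ∀ i j : ℕ, i ≠ j → ¬ (x + i • y) ∣ (x + j • y) := by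
    intro i j hne
    rw [hform i, hform j]
    apply not_dvd_of_eval (v := ![0, -(i : k), 1, 0])
    · rw [eval_F]; simp
    · rw [eval_F]
      simp
      intro h
      have hk : (i : k) = (j : k) := by linear_combination -h
      exact hne (by exact_mod_cast hk)
  have hvL : eval (![0, 1, 1, 0] : Fin 4 → k) L = 0 := by
    rw [hLform, eval_F]; simp
  have hLx : ¬ L ∣ x := by
    apply not_dvd_of_eval (v := ![0, 1, 1, 0]) hvL
    simp [hx]
  have hLy : ¬ L ∣ y := by
    apply not_dvd_of_eval (v := ![0, 1, 1, 0]) hvL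
    simp [hy]
  have hLj : ∀ j : ℕ, ¬ L ∣ (x + j • y) := by
    intro j
    rw [hform j]
    apply not_dvd_of_eval (v := ![0, 1, 1, 0]) hvL
    rw [eval_F]
    simp
    intro h
    have hk : ((1 + j : ℕ) : k) = 0 := by push_cast; linear_combination h
    exact absurd (Nat.cast_eq_zero.mp hk) (by omega)
  -- phi fixes the linear forms
  have hphiX : phi x = x := by rw [hx]; simp [phi]
  have hphiY : phi y = y := hy ▸ phi_X2
  have hphiL : phi L = L := by rw [hLform]; exact phi_F _ _
  have hphiI : ∀ i : ℕ, phi (x + i • y) = x + i • y := by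
    intro i; rw [hform i]; exact phi_F _ _
  -- from membership in span {g, z}, g divides phi f
  have key : ∀ (g f : MvPolynomial (Fin 4) k), phi g = g →
      f ∈ Ideal.span {g, z} → g ∣ phi f := by
    intro g f hg hf
    obtain ⟨a, b, hab⟩ := Ideal.mem_span_pair.mp hf
    refine ⟨phi a, ?_⟩
    rw [← hab]
    rw [map_add, map_mul, map_mul, hg, hz, phi_X3, mul_zero, add_zero, mul_comm]
  rw [Submodule.add_eq_sup, Submodule.add_eq_sup]
  apply le_antisymm
  · -- hard inclusion
    refine sup_le ?_ le_sup_right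
    intro f hf
    simp only [J, Ideal.mem_inf, Ideal.mem_iInf] at hf
    obtain ⟨⟨⟨⟨⟨⟨⟨hA, hB⟩, hC⟩, -⟩, hE⟩, -⟩, -⟩, -⟩ := hf
    have hdx : x ∣ phi f := key x f hphiX hA
    have hdy : y ∣ phi f := key y f hphiY hB
    have hdL : L ∣ phi f := key L f hphiL hE
    have h2 : x * y ∣ phi f := mul_dvd_step hprimeY hdy hdx hyx
    have h3 : ∀ S : Finset ℕ, S ⊆ Finset.Icc 1 m →
        x * y * ∏ i ∈ S, (x + i • y) ∣ phi f := by
      intro S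
      induction S using Finset.induction_on with
      | empty => intro _; simpa using h2
      | insert i S hiS ih =>
        intro hsub
        have hi : i ∈ Finset.Icc 1 m := hsub (Finset.mem_insert_self i S)
        have hS : S ⊆ Finset.Icc 1 m := fun j hj => hsub (Finset.mem_insert_of_mem hj)
        have hq := ih hS
        have hnot : ¬ (x + i • y) ∣ x * y * ∏ j ∈ S, (x + j • y) := by
          intro hdvd
          rcases (hprimeI i).dvd_mul.mp hdvd with h | h
          · rcases (hprimeI i).dvd_mul.mp h with h | h
            · exact hix i hi h
            · exact hiy i hi h
          · obtain ⟨j, hjS, hdj⟩ := ((hprimeI i).dvd_finset_prod_iff _).mp h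
            exact hij i j (by rintro rfl; exact hiS hjS) hdj
        have hstep := mul_dvd_step (hprimeI i) (key _ f (hphiI i) (hC i hi)) hq hnot
        rw [Finset.prod_insert hiS]
        have hre : x * y * ((x + i • y) * ∏ j ∈ S, (x + j • y)) =
            x * y * (∏ j ∈ S, (x + j • y)) * (x + i • y) := by ring
        rw [hre]
        exact hstep
    have h4 : x * y * Q ∣ phi f := h3 _ (subset_refl _)
    have hnotL : ¬ L ∣ x * y * Q := by
      intro hdvd
      rcases hprimeL.dvd_mul.mp hdvd with h | h
      · rcases hprimeL.dvd_mul.mp h with h | h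
        · exact hLx h
        · exact hLy h
      · obtain ⟨j, -, hdj⟩ := (hprimeL.dvd_finset_prod_iff _).mp h
        exact hLj j hdj
    have hfinal : P ∣ phi f := mul_dvd_step hprimeL hdL h4 hnotL
    have hsplit : f = phi f + (f - phi f) := by ring
    rw [hsplit]
    refine Submodule.add_mem_sup (Ideal.mem_span_singleton.mpr hfinal) ?_
    exact hz ▸ sub_phi_mem f
  · -- easy inclusion
    refine sup_le (le_trans ?_ le_sup_left) le_sup_right
    rw [Ideal.span_le, Set.singleton_subset_iff]
    show P ∈ J
    have hxP : x ∣ P := ((dvd_mul_right x y).mul_right Q).mul_right L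
    have hyP : y ∣ P := ((dvd_mul_left y x).mul_right Q).mul_right L
    simp only [J, Ideal.mem_inf, Ideal.mem_iInf]
    refine ⟨⟨⟨⟨⟨⟨⟨?_, ?_⟩, ?_⟩, ?_⟩, ?_⟩, ?_⟩, ?_⟩, ?_⟩
    · exact mem_of_dvd' hxP (Ideal.subset_span (Set.mem_insert _ _))
    · exact mem_of_dvd' hyP (Ideal.subset_span (Set.mem_insert _ _))
    · intro i hi
      have hd : (x + i • y) ∣ P :=
        ((Finset.dvd_prod_of_mem _ hi).mul_left (x * y)).mul_right L
      exact mem_of_dvd' hd (Ideal.subset_span (Set.mem_insert _ _))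
    · rw [Submodule.add_eq_sup]
      refine Submodule.mem_sup_left ?_
      have hxI : x ∈ Ideal.span {x, y, z} := Ideal.subset_span (by simp)
      have hyI : y ∈ Ideal.span {x, y, z} := Ideal.subset_span (by simp)
      have hQm : Q ∈ (Ideal.span {x, y, z}) ^ m := by
        have := prod_mem_pow (Finset.Icc 1 m) (fun i => x + i • y) (Ideal.span {x, y, z})
          (fun i _ => by
            show x + i • y ∈ _
            rw [nsmul_eq_mul]
            exact Ideal.add_mem _ hxI (Ideal.mul_mem_left _ _ hyI))
        simp only [Nat.card_Icc, Nat.add_sub_cancel] at this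
        exact this
      have hxyQ : x * y * Q ∈ (Ideal.span {x, y, z}) ^ (s - 1) := by
        rw [hs1, pow_add]
        have hre : x * y * Q = Q * (x * y) := by ring
        rw [hre]
        exact Ideal.mul_mem_mul hQm (by rw [pow_two]; exact Ideal.mul_mem_mul hxI hyI)
      exact Ideal.mul_mem_right _ _ hxyQ
    · exact Ideal.mul_mem_left _ _ (Ideal.subset_span (Set.mem_insert _ _))
    · have hd : x * L ∣ P := ⟨y * Q, by ring⟩
      refine mem_of_dvd' hd ?_
      rw [pow_two]
      exact Ideal.mul_mem_mul (Ideal.subset_span (by simp))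
        (Ideal.subset_span (by simp [hLdef]))
    · have hd : y * L ∣ P := ⟨x * Q, by ring⟩
      refine mem_of_dvd' hd ?_
      rw [pow_two]
      exact Ideal.mul_mem_mul (Ideal.subset_span (by simp))
        (Ideal.subset_span (by simp [hLdef]))
    · intro i hi
      have hd : (x + i • y) * L ∣ P := by
        refine ⟨x * y * ∏ j ∈ (Finset.Icc 1 m).erase i, (x + j • y), ?_⟩
        rw [hPdef, hQdef, ← Finset.mul_prod_erase _ _ hi]
        ring
      refine mem_of_dvd' hd ?_
      rw [pow_two]
      exact Ideal.mul_mem_mul (Ideal.subset_span (by simp))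
        (Ideal.subset_span (by simp [hLdef]))
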